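/- A factor of a coded shift is a coded shift: if X is a coded shift and φ : X → Y is a surjective sliding block code, then Y is a coded shift. -/

import Mathlib

variable {A B : Type*}

/-- `C*`: `w` is a concatenation of words of `C`. -/
def InStar (C : Set (List A)) (w : List A) : Prop :=
  ∃ l : List (List A), (∀ u ∈ l, u ∈ C) ∧ l.flatten = w

/-- The word read in `x` at positions `i, i+1, …, i+l-1`. -/
def window (x : ℤ → A) (i : ℤ) (l : ℕ) : List A :=
  List.ofFn (fun j : Fin l => x (i + (j : ℕ)))

/-- The language of a set of bi-infinite sequences: its finite factors. -/
def Lang (X : Set (ℤ → A)) : Set (List A) :=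
  {w | ∃ x ∈ X, ∃ i : ℤ, w = window x i w.length}

/-- The set of factors of words of `C*`. -/
def FacStar (C : Set (List A)) : Set (List A) :=
  {w | ∃ z : List A, InStar C z ∧ w <:+: z}

/-- The shift map on bi-infinite sequences. -/
def shift (x : ℤ → A) : ℤ → A := fun n => x (n + 1)

/-- The sliding block code with memory `m`, anticipation `n` and block map `f`. -/
def slide (f : List A → B) (m n : ℕ) (x : ℤ → A) : ℤ → B :=
  fun i => f (window x (i - (m : ℤ)) (m + n + 1))


lemma length_window (x : ℤ → A) (i : ℤ) (l : ℕ) : (window x i l).length = l := by simp [window]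

lemma window_getElem (x : ℤ → A) (i : ℤ) (l j : ℕ) (hj : j < l) :
    (window x i l)[j]'(by simp [window]; omega) = x (i + j) := by simp [window]

lemma window_mem_Lang {X : Set (ℤ → A)} {x : ℤ → A} (hx : x ∈ X) (i : ℤ) (l : ℕ) :
    window x i l ∈ Lang X := ⟨x, hx, i, by rw [length_window]⟩

lemma nil_mem_Lang {X : Set (ℤ → A)} (hX : X.Nonempty) : ([] : List A) ∈ Lang X := by
  obtain ⟨x, hx⟩ := hX
  exact ⟨x, hx, 0, by simp [window]⟩

lemma Lang_nonempty {X : Set (ℤ → A)} {w : List A} (hw : w ∈ Lang X) : X.Nonempty := by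
  obtain ⟨x, hx, _⟩ := hw; exact ⟨x, hx⟩

lemma infix_mem_Lang {X : Set (ℤ → A)} {w w' : List A} (hw : w ∈ Lang X) (h : w' <:+: w) :
    w' ∈ Lang X := by
  obtain ⟨x, hx, i, hwi⟩ := hw
  obtain ⟨s, t, hst⟩ := h
  refine ⟨x, hx, i + s.length, ?_⟩
  apply List.ext_getElem (by rw [length_window])
  intro j hj hj'
  rw [window_getElem _ _ _ _ (by rwa [length_window] at hj')]
  have hlen : s.length + j < w.length := by
    rw [← hst]; simp; omega
  have h1 : ((s ++ w' ++ t))[s.length + j]'(by rw [hst]; exact hlen) = w'[j] := by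
    rw [List.getElem_append_left (by simp; omega)]
    rw [List.getElem_append_right (by omega)]
    congr 1; omega
  have h2 : w[s.length + j]'hlen = x (i + (s.length + j)) := by
    rw [List.getElem_of_eq hwi hlen]
    rw [window_getElem _ _ _ _ (by rw [hwi, length_window] at hlen; omega)]
    congr 1
  rw [← h1, List.getElem_of_eq hst (by rw [hst]; exact hlen), h2]
  congr 1
  ring


-- (l ++ l').drop j |>.take k = (l.drop j).take k when j + k ≤ l.length
lemma take_drop_append (l l' : List A) (j k : ℕ) (h : j + k ≤ l.length) :
    ((l ++ l').drop j).take k = (l.drop j).take k := by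
  apply List.ext_getElem (by simp; omega)
  intro i hi hi'
  simp only [List.getElem_take, List.getElem_drop]
  have hb : j + i < l.length := by simp at hi'; omega
  rw [List.getElem_append_left hb]

-- last M letters
lemma drop_last (l₁ l₂ : List A) (M : ℕ) (h : M ≤ l₂.length) :
    (l₁ ++ l₂).drop (l₁.length + l₂.length - M) = l₂.drop (l₂.length - M) := by
  rw [List.drop_append]
  rw [List.drop_eq_nil_of_le (by omega)]
  simp
  congr 1
  omega

lemma window_take_drop (x : ℤ → A) (s : ℤ) (L j l : ℕ) (h : j + l ≤ L) :
    (((List.ofFn (fun j : Fin L => x (s + (j : ℕ)))).drop j).take l)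
      = List.ofFn (fun j' : Fin l => x (s + j + (j' : ℕ))) := by
  apply List.ext_getElem (by simp; omega)
  intro i hi hi'
  simp only [List.getElem_take, List.getElem_drop, List.getElem_ofFn]
  congr 1
  push_cast
  ring


lemma instar_nil (C : Set (List A)) : InStar C [] := ⟨[], by simp, rfl⟩

lemma instar_append {C : Set (List A)} {v w : List A} (hv : InStar C v) (hw : InStar C w) :
    InStar C (v ++ w) := by
  obtain ⟨l1, h1, e1⟩ := hv
  obtain ⟨l2, h2, e2⟩ := hw
  exact ⟨l1 ++ l2, by intro u hu; rcases List.mem_append.1 hu with h | h; exacts [h1 u h, h2 u h],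
    by simp [e1, e2]⟩

lemma instar_replicate {C : Set (List A)} {e : List A} (he : InStar C e) (k : ℕ) :
    InStar C (List.replicate k e).flatten := by
  induction k with
  | zero => simpa using instar_nil C
  | succ k ih =>
    rw [List.replicate_succ, List.flatten_cons]
    exact instar_append he ih

def out (f : List A → B) (M : ℕ) (q v : List A) : List B :=
  List.ofFn fun j : Fin v.length => f (((q ++ v).drop (j:ℕ)).take (M+1))

lemma length_out (f : List A → B) (M : ℕ) (q v : List A) : (out f M q v).length = v.length := by
  simp [out]

lemma out_getElem (f : List A → B) (M : ℕ) (q v : List A) (j : ℕ) (hj : j < v.length) :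
    (out f M q v)[j]'(by rw [length_out]; exact hj) = f (((q ++ v).drop j).take (M+1)) := by
  simp [out]

lemma out_nil (f : List A → B) (M : ℕ) (q : List A) : out f M q [] = [] := by
  simp [out]

lemma out_append (f : List A → B) (M : ℕ) (q v₁ v₂ : List A) (hq : M ≤ q.length) :
    out f M q (v₁ ++ v₂) = out f M q v₁ ++ out f M ((q ++ v₁).drop v₁.length) v₂ := by
  apply List.ext_getElem (by simp [length_out])
  intro j hj hj'
  rw [length_out] at hj
  simp only [List.length_append] at hj
  rcases lt_or_ge j v₁.length with h | h
  · rw [List.getElem_append_left (by rw [length_out]; exact h)]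
    rw [out_getElem _ _ _ _ _ (by simp; omega), out_getElem _ _ _ _ _ h]
    congr 1
    rw [← List.append_assoc]
    exact take_drop_append _ _ _ _ (by simp; omega)
  · rw [List.getElem_append_right (by rw [length_out]; omega)]
    rw [out_getElem _ _ _ _ _ (by simp; omega),
      out_getElem _ _ _ _ _ (by rw [length_out]; omega)]
    congr 1
    have h1 : (q ++ v₁ ++ v₂).drop v₁.length = ((q ++ v₁).drop v₁.length) ++ v₂ := by
      rw [List.drop_append]
      simp
    rw [← h1, List.drop_drop, ← List.append_assoc]
    congr 2
    rw [length_out]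
    omega


lemma shiftZ_mem {X : Set (ℤ → A)} (hXinv : shift '' X = X) (t : ℤ) {x : ℤ → A} (hx : x ∈ X) :
    (fun s => x (s + t)) ∈ X := by
  induction t using Int.induction_on with
  | zero => simpa using hx
  | succ k ih =>
    have : (fun s : ℤ => x (s + (k + 1))) = shift (fun s => x (s + k)) := by
      funext s; simp [shift]; ring_nf
    rw [this, ← hXinv]
    exact Set.mem_image_of_mem _ ih
  | pred k ih =>
    -- x' := fun s => x (s - (k+1)); shift x' = fun s => x (s - k) ∈ X
    have h1 : (fun s : ℤ => x (s + -(k:ℤ))) ∈ shift '' X := by rw [hXinv]; exact ih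
    obtain ⟨x', hx', he⟩ := h1
    have : x' = fun s : ℤ => x (s + (-(k:ℤ) - 1)) := by
      funext s
      have := congrFun he (s - 1)
      simp [shift] at this
      rw [this]
      congr 1
      ring
    rw [← this]
    exact hx'

lemma mem_of_windows [TopologicalSpace A] [DiscreteTopology A]
    {X : Set (ℤ → A)} (hXcl : IsClosed X) (hXinv : shift '' X = X) {x : ℤ → A}
    (h : ∀ k : ℕ, window x (-(k:ℤ)) (2*k+1) ∈ Lang X) : x ∈ X := by
  rw [← hXcl.closure_eq]
  rw [mem_closure_iff]
  intro o ho hxo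
  obtain ⟨I, u, hu, hsub⟩ := isOpen_pi_iff.1 ho x hxo
  -- choose k bounding I
  have bound : ∀ (J : Finset ℤ), ∃ k : ℕ, ∀ i ∈ J, -(k:ℤ) ≤ i ∧ i ≤ (k:ℤ) := by
    intro J
    induction J using Finset.induction with
    | empty => exact ⟨0, by simp⟩
    | @insert a s ha ih =>
      obtain ⟨k, hk⟩ := ih
      exact ⟨k + a.natAbs, by
        intro i hi
        rcases Finset.mem_insert.1 hi with rfl | hi
        · omega
        · have := hk i hi; omega⟩
  obtain ⟨k, hk⟩ := bound I
  obtain ⟨xk, hxk, i0, hw⟩ := h k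
  -- x' agrees with x on [-k, k]
  set x' : ℤ → A := fun s => xk (s + (i0 + k)) with hx'
  have hx'X : x' ∈ X := shiftZ_mem hXinv _ hxk
  have hagree : ∀ i : ℤ, -(k:ℤ) ≤ i → i ≤ (k:ℤ) → x' i = x i := by
    intro i h1 h2
    have hj : ((i + k).toNat) < 2*k+1 := by omega
    have e1 := window_getElem x (-(k:ℤ)) (2*k+1) ((i+k).toNat) hj
    have hlen : (window x (-(k:ℤ)) (2*k+1)).length = 2*k+1 := length_window _ _ _
    rw [hlen] at hw
    have e2 : (window x (-(k:ℤ)) (2*k+1))[(i+k).toNat]'(by rw [hlen]; exact hj)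
        = (window xk i0 (2*k+1))[(i+k).toNat]'(by rw [length_window]; exact hj) :=
      List.getElem_of_eq hw _
    rw [e1, window_getElem _ _ _ _ hj] at e2
    have h3 : (-(k:ℤ) + ((i+k).toNat : ℤ)) = i := by omega
    have h4 : (i0 + ((i+k).toNat:ℤ)) = i + (i0 + k) := by omega
    rw [h3, h4] at e2
    exact e2.symm
  refine ⟨x', ?_, hx'X⟩
  apply hsub
  intro i hi
  rw [hagree i (hk i hi).1 (hk i hi).2]
  exact (hu i hi).2


lemma flatten_replicate_length (e : List A) (k : ℕ) :
    (List.replicate k e).flatten.length = k * e.length := by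
  induction k with
  | zero => simp
  | succ k ih => rw [List.replicate_succ, List.flatten_cons, List.length_append, ih]; ring

lemma flatten_replicate_getElem (e : List A) (he : e ≠ []) (k t : ℕ) (ht : t < k * e.length) :
    (List.replicate k e).flatten[t]'(by rw [flatten_replicate_length]; exact ht)
      = e[t % e.length]'(Nat.mod_lt _ (by cases e; simp at he; simp)) := by
  induction k generalizing t with
  | zero => simp at ht
  | succ k ih =>
    have hL : 0 < e.length := by cases e; simp at he; simp
    rcases lt_or_ge t e.length with h | h
    · have : (List.replicate (k+1) e).flatten = e ++ (List.replicate k e).flatten := by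
        rw [List.replicate_succ, List.flatten_cons]
      rw [List.getElem_of_eq this, List.getElem_append_left h]
      congr 1
      exact (Nat.mod_eq_of_lt h).symm
    · have : (List.replicate (k+1) e).flatten = e ++ (List.replicate k e).flatten := by
        rw [List.replicate_succ, List.flatten_cons]
      rw [List.getElem_of_eq this, List.getElem_append_right (by omega)]
      have ht' : t - e.length < k * e.length := by
        have h2 : (k+1) * e.length = k * e.length + e.length := by ring
        omega
      rw [ih _ ht']
      congr 1
      conv_rhs => rw [Nat.mod_eq_sub_mod h]

lemma out_mem [TopologicalSpace A] [DiscreteTopology A]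
    (f : List A → B) (M : ℕ)
    {X : Set (ℤ → A)} (hXcl : IsClosed X) (hXinv : shift '' X = X)
    {C : Set (List A)} (hcoded : Lang X = FacStar C)
    {z₀ : List A} (hz₀ : InStar C z₀) (hM : M ≤ z₀.length)
    {V : List A} (hV : InStar C V) (hVne : V ≠ []) (d : A) :
    out f M (z₀.drop (z₀.length - M)) V ∈ Lang (slide f M 0 '' X) := by
  classical
  set e : List A := z₀ ++ V with he
  set L : ℕ := e.length with hLdef
  have hL : 0 < L := by
    rw [hLdef, he, List.length_append]
    have := List.length_pos_iff.2 hVne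
    omega
  have hene : e ≠ [] := List.ne_nil_of_length_pos (hLdef ▸ hL)
  set x : ℤ → A := fun t => e.getD ((t % (L:ℤ)).toNat) d with hx
  have hEstar : InStar C e := instar_append hz₀ hV
  have hxval : ∀ t : ℕ, x (t : ℤ) = e.getD (t % L) d := by
    intro t
    show e.getD (((t:ℤ) % (L:ℤ)).toNat) d = e.getD (t % L) d
    rw [show ((t:ℤ) % (L:ℤ)) = ((t % L : ℕ) : ℤ) by push_cast; ring, Int.toNat_natCast]
  -- windows of x are in Lang X
  have hwin : ∀ (i : ℤ) (l : ℕ), window x i l ∈ Lang X := by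
    intro i l
    set s : ℕ := (i % (L:ℤ)).toNat with hs
    have hs0 : (0:ℤ) ≤ i % L := Int.emod_nonneg _ (by exact_mod_cast hL.ne')
    have hsL : s < L := by
      have := Int.emod_lt_of_pos i (show (0:ℤ) < L by exact_mod_cast hL)
      omega
    set F : List A := (List.replicate (s + l) e).flatten with hF
    have hFlen : F.length = (s + l) * L := flatten_replicate_length e (s + l)
    have hsl : s + l ≤ (s + l) * L := Nat.le_mul_of_pos_right _ hL
    have hweq : window x i l = (F.drop s).take l := by
      apply List.ext_getElem (by rw [length_window]; simp [hFlen]; omega)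
      intro j hj hj'
      rw [length_window] at hj
      rw [window_getElem _ _ _ _ hj]
      simp only [List.getElem_take, List.getElem_drop]
      have hb : s + j < (s+l) * L := by omega
      rw [flatten_replicate_getElem e hene _ _ hb]
      have h1 : i % (L:ℤ) = (s : ℤ) := by omega
      have h2 : i + (j:ℤ) = ((s:ℤ) + (j:ℤ)) + (L:ℤ) * (i / L) := by
        have := Int.mul_ediv_add_emod i (L:ℤ)
        omega
      have hmod : (i + (j:ℤ)) % L = (((s + j) % L : ℕ) : ℤ) := by
        rw [h2, Int.add_mul_emod_self_left]
        push_cast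
        ring
      simp only [hx]
      rw [hmod, Int.toNat_natCast]
      rw [List.getD_eq_getElem e d (by exact Nat.mod_lt _ hL)]
    rw [hweq, hcoded]
    refine ⟨F, instar_replicate hEstar _, ?_⟩
    exact ((List.take_prefix _ _).isInfix).trans (List.drop_suffix _ _).isInfix
  have hxX : x ∈ X := mem_of_windows hXcl hXinv (fun k => hwin _ _)
  -- the image word
  have hdropE : e.drop (z₀.length - M) = z₀.drop (z₀.length - M) ++ V := by
    rw [he, List.drop_append, show z₀.length - M - z₀.length = 0 by omega,
      List.drop_zero]
  have hout : out f M (z₀.drop (z₀.length - M)) V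
      = window (slide f M 0 x) (z₀.length) V.length := by
    apply List.ext_getElem (by rw [length_out, length_window])
    intro j hj hj'
    rw [length_out] at hj
    rw [window_getElem _ _ _ _ hj, out_getElem _ _ _ _ _ hj]
    show _ = f (window x ((z₀.length : ℤ) + (j:ℕ) - (M:ℤ)) (M + 0 + 1))
    congr 1
    rw [← hdropE, List.drop_drop]
    have hidx : ((z₀.length : ℤ) + (j:ℕ) - (M:ℤ)) = ((z₀.length - M + j : ℕ) : ℤ) := by
      push_cast
      omega
    rw [hidx]
    apply List.ext_getElem
      (by rw [length_window]; simp [hLdef, he] at *; omega)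
    intro j' hj2 hj3
    rw [length_window] at hj3
    rw [window_getElem _ _ _ _ hj3]
    simp only [List.getElem_take, List.getElem_drop]
    have hcast : ((z₀.length - M + j : ℕ) : ℤ) + (j' : ℕ) = ((z₀.length - M + j + j' : ℕ) : ℤ) := by
      push_cast; ring
    rw [hcast, hxval]
    have hlt : z₀.length - M + j + j' < L := by
      simp only [hLdef, he, List.length_append]
      omega
    rw [Nat.mod_eq_of_lt hlt, List.getD_eq_getElem e d hlt]
  refine ⟨slide f M 0 x, ⟨x, hxX, rfl⟩, (z₀.length : ℤ), ?_⟩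
  rw [length_out]
  exact hout

lemma window_take_drop' (x : ℤ → A) (s : ℤ) (L j l : ℕ) (h : j + l ≤ L) :
    ((window x s L).drop j).take l = window x (s + j) l :=
  window_take_drop x s L j l h

lemma state_comp {p v V : List A} (h1 : (p ++ v).drop v.length = p)
    (h2 : (p ++ V).drop V.length = p) :
    (p ++ (v ++ V)).drop (v ++ V).length = p := by
  rw [show p ++ (v ++ V) = (p ++ v) ++ V from (List.append_assoc _ _ _).symm]
  have h3 : ((p ++ v) ++ V).drop v.length = p ++ V := by
    rw [List.drop_append, h1,
      show v.length - (p ++ v).length = 0 by simp, List.drop_zero]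
  have h4 : ((p ++ v) ++ V).drop (v.length + V.length)
      = (((p ++ v) ++ V).drop v.length).drop V.length := by
    rw [List.drop_drop]
  rw [List.length_append, h4, h3, h2]

lemma slide_image_reduce {X : Set (ℤ → A)} (hXinv : shift '' X = X) (f : List A → B) (m n : ℕ) :
    slide f m n '' X = slide f (m+n) 0 '' X := by
  have key : ∀ x : ℤ → A, slide f m n x = slide f (m+n) 0 (fun s => x (s + n)) := by
    intro x; funext i
    simp only [slide, window]
    congr 1
    apply List.ext_getElem (by simp)
    intro j hj hj'
    simp only [List.getElem_ofFn]
    congr 1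
    push_cast
    ring
  ext y
  constructor
  · rintro ⟨x, hx, rfl⟩
    exact ⟨(fun s => x (s + n)), shiftZ_mem hXinv n hx, (key x).symm⟩
  · rintro ⟨x, hx, rfl⟩
    refine ⟨(fun s => x (s + (-(n:ℤ)))), shiftZ_mem hXinv _ hx, ?_⟩
    rw [key]
    congr 1
    funext s
    congr 1
    ring

/-- a factor of a coded shift is a coded shift: if `X` is a coded
shift and `φ : X → Y` is a surjective sliding block code, then `Y` is coded. -/
theorem stmt7 [Fintype A] [Fintype B]
    [TopologicalSpace A] [DiscreteTopology A]
    (X : Set (ℤ → A)) (hXcl : IsClosed X) (hXinv : shift '' X = X)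
    (C : Set (List A)) (hne : ∀ c ∈ C, c ≠ [])
    (hcoded : Lang X = FacStar C)
    (f : List A → B) (m n : ℕ)
    (Y : Set (ℤ → B)) (hY : Y = slide f m n '' X) :
    ∃ D : Set (List B), Lang Y = FacStar D := by
  classical
  set M := m + n with hMdef
  have hYr : Y = slide f M 0 '' X := by rw [hY, slide_image_reduce hXinv]
  have hXne : X.Nonempty := by
    have h0 : ([] : List A) ∈ FacStar C := ⟨[], instar_nil C, List.nil_infix⟩
    rw [← hcoded] at h0
    exact Lang_nonempty h0
  obtain ⟨x₀, hx₀⟩ := hXne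
  have hYne : Y.Nonempty := ⟨slide f M 0 x₀, by rw [hYr]; exact ⟨x₀, hx₀, rfl⟩⟩
  have hwM : window x₀ 0 M ∈ FacStar C := by
    rw [← hcoded]; exact window_mem_Lang hx₀ 0 M
  obtain ⟨z₀, hz₀, hinf₀⟩ := hwM
  have hMz : M ≤ z₀.length := by
    have := hinf₀.length_le
    rw [length_window] at this
    exact this
  set p₀ : List A := z₀.drop (z₀.length - M) with hp₀
  have hp₀len : p₀.length = M := by rw [hp₀, List.length_drop]; omega
  refine ⟨{w | ∃ v : List A, v ≠ [] ∧ InStar C v ∧ (p₀ ++ v).drop v.length = p₀ ∧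
    w = out f M p₀ v}, ?_⟩
  apply Set.Subset.antisymm
  · -- Lang Y ⊆ FacStar D
    intro w hw
    by_cases hwnil : w = []
    · exact ⟨[], ⟨[], by simp, rfl⟩, by rw [hwnil]⟩
    obtain ⟨y, hy, i, hwi⟩ := hw
    rw [hYr] at hy
    obtain ⟨x, hxX, rfl⟩ := hy
    have hslide : ∀ t : ℤ, slide f M 0 x t = f (window x (t - M) (M+1)) := fun t => rfl
    set u : List A := window x (i - M) (w.length + M) with hu
    have hulen : u.length = w.length + M := length_window _ _ _
    have huL : u ∈ FacStar C := by rw [← hcoded]; exact window_mem_Lang hxX _ _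
    obtain ⟨z, hz, a, b, hab⟩ := huL
    set q : List A := u.take M with hq
    set u₂ : List A := u.drop M with hu₂
    have hqlen : q.length = M := by rw [hq, List.length_take]; omega
    have hu₂len : u₂.length = w.length := by rw [hu₂, List.length_drop]; omega
    have hqu : q ++ u₂ = u := List.take_append_drop _ _
    set v : List A := z ++ z₀ with hv
    have hvC : InStar C v := instar_append hz hz₀
    have hzlen : z.length = a.length + u.length + b.length := by rw [← hab]; simp; omega
    have hvne : v ≠ [] := by
      apply List.ne_nil_of_length_pos
      rw [hv, List.length_append]
      have : 0 < w.length := List.length_pos_iff.2 hwnil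
      omega
    have hret : (p₀ ++ v).drop v.length = p₀ := by
      rw [show p₀ ++ v = (p₀ ++ z) ++ z₀ from by rw [hv, List.append_assoc],
        show v.length = (p₀ ++ z).length + z₀.length - M from by
          simp [hv, hp₀len]; omega,
        drop_last _ _ _ hMz]
    -- split of out along v = (a ++ q) ++ (u₂ ++ (b ++ z₀))
    have hvdec : v = (a ++ q) ++ (u₂ ++ (b ++ z₀)) := by
      rw [hv, ← hab, ← hqu]
      simp [List.append_assoc]
    have hq' : (p₀ ++ (a ++ q)).drop (a ++ q).length = q := by
      rw [show p₀ ++ (a ++ q) = (p₀ ++ a) ++ q from by rw [List.append_assoc],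
        show (a ++ q).length = (p₀ ++ a).length + q.length - M from by
          simp [hp₀len, hqlen]; omega,
        drop_last _ _ _ (le_of_eq hqlen.symm), hqlen]
      simp
    have hsplit : out f M p₀ v = out f M p₀ (a ++ q) ++ out f M q (u₂ ++ (b ++ z₀)) := by
      rw [hvdec, out_append f M p₀ _ _ (le_of_eq hp₀len.symm), hq']
    have hwtake : w = (out f M q (u₂ ++ (b ++ z₀))).take w.length := by
      apply List.ext_getElem (by rw [List.length_take, length_out]; simp; omega)
      intro j hj hj'
      have hjw : j < w.length := hj
      have hwj : w[j]'hj = f (window x (i + j - M) (M+1)) := by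
        rw [List.getElem_of_eq hwi hjw]
        rw [window_getElem _ _ _ _ hjw]
        exact hslide _
      rw [hwj]
      rw [List.getElem_take]
      rw [out_getElem _ _ _ _ _ (by simp [hu₂len]; omega)]
      congr 1
      rw [show q ++ (u₂ ++ (b ++ z₀)) = u ++ (b ++ z₀) from by rw [← List.append_assoc, hqu]]
      rw [take_drop_append _ _ _ _ (by omega)]
      rw [hu, window_take_drop' x (i - M) (w.length + M) j (M+1) (by omega)]
      congr 1
      ring
    refine ⟨out f M p₀ v, ⟨[out f M p₀ v], ?_, by simp⟩, ?_⟩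
    · intro uu huu
      rw [List.mem_singleton] at huu
      exact ⟨v, hvne, hvC, hret, huu⟩
    · have h1 : w <+: out f M q (u₂ ++ (b ++ z₀)) := hwtake ▸ List.take_prefix _ _
      have h2 : out f M q (u₂ ++ (b ++ z₀)) <:+ out f M p₀ v := ⟨_, hsplit.symm⟩
      exact h1.isInfix.trans h2.isInfix
  · -- FacStar D ⊆ Lang Y
    rintro w ⟨zz, ⟨l, hl, hflat⟩, hinf⟩
    have hgood : ∃ V, InStar C V ∧ (p₀ ++ V).drop V.length = p₀ ∧ l.flatten = out f M p₀ V := by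
      clear hflat hinf
      induction l with
      | nil => exact ⟨[], instar_nil C, by simp, (out_nil f M p₀).symm⟩
      | cons uu l ih =>
        obtain ⟨V, h1, h2, h3⟩ := ih (fun v hv => hl v (List.mem_cons_of_mem _ hv))
        obtain ⟨v, hvne, hvC, hvret, hveq⟩ := hl uu List.mem_cons_self
        refine ⟨v ++ V, instar_append hvC h1, state_comp hvret h2, ?_⟩
        rw [List.flatten_cons, h3, hveq,
          out_append f M p₀ v V (le_of_eq hp₀len.symm), hvret]
    obtain ⟨V, hVC, hVret, hzz⟩ := hgood
    rw [hflat] at hzz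
    by_cases hVnil : V = []
    · have : zz = [] := by rw [hzz, hVnil, out_nil]
      rw [this] at hinf
      have : w = [] := List.eq_nil_of_infix_nil hinf
      rw [this]
      exact nil_mem_Lang hYne
    · have hmem := out_mem f M hXcl hXinv hcoded hz₀ hMz hVC hVnil (x₀ 0)
      rw [← hp₀, ← hYr] at hmem
      exact infix_mem_Lang hmem (hzz ▸ hinf)
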